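/- Let β be a positive integer and m ≥ 1 a real number. Let x_1,…,x_β be i.i.d. arcsine-distributed random variables, d uniform on {−1,+1}, and h a Nakagami-m amplitude, all mutually independent. Let Y = h·(1+d)·Σ_{k=1}^{β} x_k (the correlator output of a DCSK symbol). Then for any reals ε₁, ε₂, the harvested DC satisfies ε₁·E[Y²] + ε₂·E[Y⁴] = ε₁·β + ε₂·(3(1+m)/m)·β·(2β−1). -/

import Mathlib

open MeasureTheory ProbabilityTheory
open scoped ENNReal

/-- The arcsine (Chebyshev invariant) distribution on (−1,1), with density
1/(π√(1−x²)) for |x| < 1 and 0 otherwise. -/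
noncomputable def arcsineMeasure : Measure ℝ :=
  volume.withDensity fun x =>
    ENNReal.ofReal (if |x| < 1 then 1 / (Real.pi * Real.sqrt (1 - x ^ 2)) else 0)

/-- The uniform distribution on {−1, +1}. -/
noncomputable def rademacherMeasure : Measure ℝ :=
  (1 / 2 : ℝ≥0∞) • Measure.dirac (-1) + (1 / 2 : ℝ≥0∞) • Measure.dirac 1

/-- The distribution of a unit-mean-power Nakagami-m amplitude, with density
2 m^m z^{2m−1} e^{−m z²}/Γ(m) for z ≥ 0 and 0 otherwise. -/
noncomputable def nakagamiMeasure (m : ℝ) : Measure ℝ :=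
  volume.withDensity fun z =>
    ENNReal.ofReal (if 0 ≤ z then
      2 * m ^ m * z ^ (2 * m - 1) * Real.exp (-m * z ^ 2) / Real.Gamma m else 0)

namespace DCSKHelper

open Real Set
open scoped NNReal

/-! ### Arcsine moments -/

noncomputable def φ (x : ℝ) : ℝ := if |x| < 1 then 1 / (Real.pi * Real.sqrt (1 - x ^ 2)) else 0

lemma φ_nonneg (x : ℝ) : 0 ≤ φ x := by
  unfold φ; split <;> positivity

lemma φ_meas : Measurable φ := by
  unfold φ
  apply Measurable.ite (measurableSet_lt (by fun_prop) measurable_const)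
  · fun_prop
  · exact measurable_const

lemma φ_eq_of_le {x : ℝ} (hx : |x| ≤ 1) : φ x = 1 / (Real.pi * Real.sqrt (1 - x ^ 2)) := by
  rcases lt_or_eq_of_le hx with h | h
  · simp [φ, h]
  · have h2 : x ^ 2 = 1 := by
      have := sq_abs x; rw [h] at this; simpa using this.symm
    simp [φ, h2, not_lt.mpr (le_of_eq h.symm)]

lemma φ_zero_of_ge {x : ℝ} (hx : 1 ≤ |x|) : φ x = 0 := by
  rcases lt_or_eq_of_le hx with h | h
  · simp [φ, not_lt.mpr (le_of_lt h)]
  · rw [φ_eq_of_le (le_of_eq h.symm)]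
    have h2 : x ^ 2 = 1 := by
      have := sq_abs x; rw [← h] at this; simpa using this.symm
    simp [h2]

lemma arcsine_integral (g : ℝ → ℝ) :
    ∫ t, g t ∂arcsineMeasure = ∫ t, φ t * g t := by
  have h : arcsineMeasure = volume.withDensity fun x => ((Real.toNNReal (φ x) : ℝ≥0) : ℝ≥0∞) := rfl
  rw [h, integral_withDensity_eq_integral_smul (φ_meas.real_toNNReal) g]
  congr 1 with t
  simp [NNReal.smul_def, Real.coe_toNNReal _ (φ_nonneg t)]

lemma sqrt_pos_of_mem {x : ℝ} (hx : x ∈ Ioo (-1:ℝ) 1) : 0 < Real.sqrt (1 - x^2) := by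
  apply Real.sqrt_pos.2; nlinarith [hx.1, hx.2]

lemma hasDerivAt_s {x : ℝ} (hx : x ∈ Ioo (-1:ℝ) 1) :
    HasDerivAt (fun y => Real.sqrt (1 - y^2)) (-x / Real.sqrt (1 - x^2)) x := by
  have h0 : (0:ℝ) < 1 - x^2 := by nlinarith [hx.1, hx.2]
  have hinner : HasDerivAt (fun y : ℝ => 1 - y^2) (-(2*x^1)) x :=
    (hasDerivAt_pow 2 x).const_sub 1
  have := (Real.hasDerivAt_sqrt h0.ne').comp x (by simpa using hinner)
  refine this.congr_deriv (Eq.symm ?_)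
  have hs : Real.sqrt (1 - x^2) ≠ 0 := (Real.sqrt_pos.2 h0).ne'
  field_simp

lemma integrableOn_phi0 :
    IntegrableOn (fun x : ℝ => 1 / (Real.pi * Real.sqrt (1 - x^2))) (Ioc (-1:ℝ) 1) := by
  apply intervalIntegral.integrableOn_deriv_of_nonneg
    (g := fun x => Real.pi⁻¹ * Real.arcsin x)
  · exact (continuous_const.mul Real.continuous_arcsin).continuousOn
  · intro x hx
    have := (Real.hasDerivAt_arcsin (ne_of_gt hx.1) (ne_of_lt hx.2)).const_mul Real.pi⁻¹
    refine this.congr_deriv (Eq.symm ?_)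
    field_simp
  · intro x hx
    positivity

lemma intervalIntegrable_f (n : ℕ) :
    IntervalIntegrable (fun x : ℝ => x^n / (Real.pi * Real.sqrt (1 - x^2))) volume (-1) 1 := by
  constructor
  · apply Integrable.mono integrableOn_phi0
    · exact (Measurable.div (by fun_prop) (by fun_prop)).aestronglyMeasurable
    · filter_upwards [ae_restrict_mem measurableSet_Ioc] with x hx
      have hx1 : |x| ≤ 1 := abs_le.2 ⟨le_of_lt hx.1, hx.2⟩
      have hc : 0 ≤ Real.pi * Real.sqrt (1 - x^2) := by positivity
      rw [Real.norm_eq_abs, Real.norm_eq_abs, abs_div, abs_pow, abs_of_nonneg hc,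
        abs_of_nonneg (by positivity : (0:ℝ) ≤ 1 / (Real.pi * Real.sqrt (1 - x^2)))]
      gcongr
      exact pow_le_one₀ (abs_nonneg x) hx1
  · rw [Set.Ioc_eq_empty (by norm_num)]
    exact integrableOn_empty

lemma tendsto_helper {F : ℝ → ℝ} (hF : Continuous F) (a : ℝ) {s : Set ℝ} {v : ℝ}
    (hv : F a = v) : Filter.Tendsto F (nhdsWithin a s) (nhds v) :=
  hv ▸ (hF.tendsto a).mono_left nhdsWithin_le_nhds

lemma cont1 : Continuous (fun x : ℝ => -Real.pi⁻¹ * Real.sqrt (1 - x^2)) := by fun_prop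
lemma cont2 : Continuous (fun x : ℝ => (2*Real.pi)⁻¹ * (Real.arcsin x - x * Real.sqrt (1 - x^2))) :=
  continuous_const.mul (Real.continuous_arcsin.sub (continuous_id.mul (by fun_prop)))
lemma cont4 : Continuous (fun x : ℝ => (8*Real.pi)⁻¹ * (3 * Real.arcsin x - (3*x + 2*x^3) * Real.sqrt (1 - x^2))) :=
  continuous_const.mul ((continuous_const.mul Real.continuous_arcsin).sub ((by fun_prop : Continuous (fun x : ℝ => 3*x+2*x^3)).mul (by fun_prop)))

lemma interval_moment1 :
    ∫ x in (-1:ℝ)..1, x^1 / (Real.pi * Real.sqrt (1 - x^2)) = 0 := by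
  have h := intervalIntegral.integral_eq_sub_of_hasDerivAt_of_tendsto
    (f := fun x => -Real.pi⁻¹ * Real.sqrt (1 - x^2))
    (f' := fun x => x^1 / (Real.pi * Real.sqrt (1 - x^2)))
    (a := -1) (b := 1) (by norm_num)
    (fun x hx => by
      have hs := sqrt_pos_of_mem hx
      have := (hasDerivAt_s hx).const_mul (-Real.pi⁻¹)
      refine this.congr_deriv (Eq.symm ?_)
      field_simp)
    (intervalIntegrable_f 1)
    (fa := 0) (fb := 0)
    (tendsto_helper cont1 (-1) (by norm_num))
    (tendsto_helper cont1 1 (by norm_num))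
  simpa using h

lemma interval_moment2 :
    ∫ x in (-1:ℝ)..1, x^2 / (Real.pi * Real.sqrt (1 - x^2)) = 1/2 := by
  have hπ : Real.pi ≠ 0 := Real.pi_ne_zero
  have h := intervalIntegral.integral_eq_sub_of_hasDerivAt_of_tendsto
    (f := fun x => (2*Real.pi)⁻¹ * (Real.arcsin x - x * Real.sqrt (1 - x^2)))
    (f' := fun x => x^2 / (Real.pi * Real.sqrt (1 - x^2)))
    (a := -1) (b := 1) (by norm_num)
    (fun x hx => by
      have hs := sqrt_pos_of_mem hx
      have h0 : (0:ℝ) < 1 - x^2 := by nlinarith [hx.1, hx.2]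
      have hsq : Real.sqrt (1 - x^2) ^ 2 = 1 - x^2 := Real.sq_sqrt h0.le
      have harc := Real.hasDerivAt_arcsin (ne_of_gt hx.1) (ne_of_lt hx.2)
      have hprod := (hasDerivAt_id x).mul (hasDerivAt_s hx)
      have := ((harc.sub hprod).const_mul ((2*Real.pi)⁻¹))
      refine this.congr_deriv (Eq.symm ?_)
      field_simp
      simp only [id_eq]
      nlinarith [hsq, hs])
    (intervalIntegrable_f 2)
    (fa := (2*Real.pi)⁻¹ * (-(Real.pi/2))) (fb := (2*Real.pi)⁻¹ * (Real.pi/2))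
    (tendsto_helper cont2 (-1) (by norm_num [Real.arcsin_neg_one]))
    (tendsto_helper cont2 1 (by norm_num [Real.arcsin_one]))
  rw [h]
  field_simp
  ring

lemma interval_moment4 :
    ∫ x in (-1:ℝ)..1, x^4 / (Real.pi * Real.sqrt (1 - x^2)) = 3/8 := by
  have hπ : Real.pi ≠ 0 := Real.pi_ne_zero
  have h := intervalIntegral.integral_eq_sub_of_hasDerivAt_of_tendsto
    (f := fun x => (8*Real.pi)⁻¹ * (3 * Real.arcsin x - (3*x + 2*x^3) * Real.sqrt (1 - x^2)))
    (f' := fun x => x^4 / (Real.pi * Real.sqrt (1 - x^2)))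
    (a := -1) (b := 1) (by norm_num)
    (fun x hx => by
      have hs := sqrt_pos_of_mem hx
      have h0 : (0:ℝ) < 1 - x^2 := by nlinarith [hx.1, hx.2]
      have hsq : Real.sqrt (1 - x^2) ^ 2 = 1 - x^2 := Real.sq_sqrt h0.le
      have harc := (Real.hasDerivAt_arcsin (ne_of_gt hx.1) (ne_of_lt hx.2)).const_mul (3:ℝ)
      have hpoly : HasDerivAt (fun y : ℝ => 3*y + 2*y^3) (3 + 6*x^2) x := by
        have h1 := ((hasDerivAt_id x).const_mul (3:ℝ))
        have h2 := ((hasDerivAt_pow 3 x).const_mul (2:ℝ))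
        have := h1.add h2
        refine this.congr_deriv (Eq.symm ?_)
        push_cast
        ring
      have hprod := hpoly.mul (hasDerivAt_s hx)
      have := ((harc.sub hprod).const_mul ((8*Real.pi)⁻¹))
      have hss : Real.sqrt (1 - x^2) * Real.sqrt (1 - x^2) = 1 - x^2 :=
        Real.mul_self_sqrt h0.le
      refine this.congr_deriv (Eq.symm ?_)
      field_simp
      linear_combination (6*x^2 + 3) * hss)
    (intervalIntegrable_f 4)
    (fa := (8*Real.pi)⁻¹ * (3 * (-(Real.pi/2)))) (fb := (8*Real.pi)⁻¹ * (3 * (Real.pi/2)))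
    (tendsto_helper cont4 (-1) (by norm_num [Real.arcsin_neg_one]))
    (tendsto_helper cont4 1 (by norm_num [Real.arcsin_one]))
  rw [h]
  field_simp
  ring

lemma arcsine_moment (n : ℕ) :
    ∫ t, t^n ∂arcsineMeasure = ∫ x in (-1:ℝ)..1, x^n / (Real.pi * Real.sqrt (1 - x^2)) := by
  rw [arcsine_integral (fun t => t^n)]
  rw [intervalIntegral.integral_of_le (by norm_num : (-1:ℝ) ≤ 1), integral_Ioc_eq_integral_Ioo]
  rw [← setIntegral_eq_integral_of_forall_compl_eq_zero
    (s := Ioo (-1:ℝ) 1) (f := fun t => φ t * t^n)]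
  · apply setIntegral_congr_fun measurableSet_Ioo
    intro x hx
    show φ x * x ^ n = x ^ n / (Real.pi * Real.sqrt (1 - x ^ 2))
    rw [φ_eq_of_le (abs_le.2 ⟨hx.1.le, hx.2.le⟩)]
    ring
  · intro x hx
    have h1 : ¬ |x| < 1 := fun hlt => hx (abs_lt.1 hlt)
    rw [φ_zero_of_ge (not_lt.1 h1), zero_mul]

lemma arcsine_moment1 : ∫ t, t^1 ∂arcsineMeasure = 0 := by
  rw [arcsine_moment 1]; exact interval_moment1

lemma arcsine_moment2 : ∫ t, t^2 ∂arcsineMeasure = 1/2 := by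
  rw [arcsine_moment 2]; exact interval_moment2

lemma arcsine_moment4 : ∫ t, t^4 ∂arcsineMeasure = 3/8 := by
  rw [arcsine_moment 4]; exact interval_moment4

lemma arcsine_out : arcsineMeasure {t : ℝ | ¬ |t| ≤ 1} = 0 := by
  have hA : MeasurableSet {t : ℝ | ¬ |t| ≤ 1} := by
    simp only [not_le]
    exact measurableSet_lt measurable_const (by fun_prop)
  unfold arcsineMeasure
  rw [withDensity_apply _ hA]
  rw [setLIntegral_congr_fun hA (fun t ht => ?_)]
  · exact lintegral_zero
  · show ENNReal.ofReal _ = (0 : ℝ≥0∞)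
    rw [if_neg (fun hlt => ht (le_of_lt hlt))]
    simp

/-! ### Nakagami moments -/

noncomputable def ψ (m : ℝ) (z : ℝ) : ℝ :=
  if 0 ≤ z then 2 * m ^ m * z ^ (2 * m - 1) * Real.exp (-m * z ^ 2) / Real.Gamma m else 0

lemma ψ_nonneg {m : ℝ} (hm : 1 ≤ m) (z : ℝ) : 0 ≤ ψ m z := by
  unfold ψ
  have h0 : (0:ℝ) < m := lt_of_lt_of_le one_pos hm
  have hg : 0 < Real.Gamma m := Real.Gamma_pos_of_pos h0
  split
  · rename_i hz
    apply div_nonneg _ hg.le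
    have h1 : (0:ℝ) ≤ m ^ m := Real.rpow_nonneg h0.le m
    have h2 : (0:ℝ) ≤ z ^ (2*m-1) := Real.rpow_nonneg hz _
    have h3 : (0:ℝ) ≤ Real.exp (-m * z^2) := (Real.exp_pos _).le
    positivity
  · exact le_refl 0

lemma ψ_meas (m : ℝ) : Measurable (ψ m) := by
  unfold ψ
  apply Measurable.ite measurableSet_Ici <;> fun_prop

lemma nakagami_integral (m : ℝ) (hm : 1 ≤ m) (g : ℝ → ℝ) :
    ∫ t, g t ∂(nakagamiMeasure m) = ∫ t, ψ m t * g t := by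
  have h : nakagamiMeasure m
      = volume.withDensity fun z => ((Real.toNNReal (ψ m z) : ℝ≥0) : ℝ≥0∞) := rfl
  rw [h, integral_withDensity_eq_integral_smul ((ψ_meas m).real_toNNReal) g]
  congr 1 with t
  simp [NNReal.smul_def, Real.coe_toNNReal _ (ψ_nonneg hm t)]

lemma nakagami_moment (m : ℝ) (hm : 1 ≤ m) (j : ℕ) :
    ∫ t, ψ m t * t^j = m ^ (-(j:ℝ)/2) * Real.Gamma (m + j/2) / Real.Gamma m := by
  have h0 : (0:ℝ) < m := lt_of_lt_of_le one_pos hm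
  have hg : 0 < Real.Gamma m := Real.Gamma_pos_of_pos h0
  rw [← setIntegral_eq_integral_of_forall_compl_eq_zero (s := Ioi (0:ℝ))
      (f := fun t => ψ m t * t^j)]
  · have hcong : ∀ z ∈ Ioi (0:ℝ),
        ψ m z * z^j = (2 * m ^ m / Real.Gamma m) * (z ^ ((2*m - 1) + j) * Real.exp (-m * z^2)) := by
      intro z hz
      have hzpos : (0:ℝ) < z := hz
      unfold ψ
      rw [if_pos hzpos.le, Real.rpow_add hzpos, ← Real.rpow_natCast z j]
      ring
    rw [setIntegral_congr_fun measurableSet_Ioi hcong, integral_const_mul]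
    have hq : (-1:ℝ) < 2*m - 1 + j := by
      have : (0:ℝ) ≤ j := Nat.cast_nonneg j
      nlinarith
    have key := integral_rpow_mul_exp_neg_mul_rpow (p := 2) (q := 2*m - 1 + j) (b := m)
      (by norm_num) hq h0
    have h2 : ∀ z : ℝ, z ^ (2*m-1+j) * Real.exp (-m * z ^ (2:ℝ)) = z ^ (2*m-1+j) * Real.exp (-m * z^2) := by
      intro z
      rw [Real.rpow_two]
    rw [show (∫ z in Ioi (0:ℝ), z ^ (2*m - 1 + j) * Real.exp (-m * z^2))
        = ∫ z in Ioi (0:ℝ), z ^ (2*m - 1 + j) * Real.exp (-m * z ^ (2:ℝ)) by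
          refine setIntegral_congr_fun measurableSet_Ioi (fun z hz => ?_); rw [h2 z], key]
    have harg : (2*m - 1 + j + 1)/2 = m + j/2 := by ring
    rw [harg]
    rw [show -(2*m - 1 + (j:ℝ) + 1)/2 = -m + (-(j:ℝ)/2) by ring, Real.rpow_add h0]
    rw [Real.rpow_neg h0.le m]
    field_simp [Real.rpow_natCast]
  · intro z hz
    have hz' : z ≤ 0 := le_of_not_gt hz
    rcases lt_or_eq_of_le hz' with h | h
    · unfold ψ; rw [if_neg (not_le.2 h), zero_mul]
    · subst h
      unfold ψ
      rw [if_pos (le_refl (0:ℝ))]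
      rw [Real.zero_rpow (by nlinarith : 2*m - 1 ≠ 0)]
      simp

lemma nakagami_sq {m : ℝ} (hm : 1 ≤ m) : ∫ t, t^2 ∂(nakagamiMeasure m) = 1 := by
  have h0 : (0:ℝ) < m := lt_of_lt_of_le one_pos hm
  have hg : Real.Gamma m ≠ 0 := (Real.Gamma_pos_of_pos h0).ne'
  rw [nakagami_integral m hm, nakagami_moment m hm 2]
  rw [show (m + (2:ℕ)/2 : ℝ) = m + 1 by norm_num, Real.Gamma_add_one h0.ne']
  rw [show (-(2:ℕ)/2 : ℝ) = -1 by norm_num, Real.rpow_neg_one]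
  field_simp

lemma nakagami_quart {m : ℝ} (hm : 1 ≤ m) :
    ∫ t, t^4 ∂(nakagamiMeasure m) = (m+1)/m := by
  have h0 : (0:ℝ) < m := lt_of_lt_of_le one_pos hm
  have hg : Real.Gamma m ≠ 0 := (Real.Gamma_pos_of_pos h0).ne'
  rw [nakagami_integral m hm, nakagami_moment m hm 4]
  rw [show (m + (4:ℕ)/2 : ℝ) = (m+1) + 1 by push_cast; ring,
    Real.Gamma_add_one (by positivity : m+1 ≠ 0), Real.Gamma_add_one h0.ne']
  rw [show (-(4:ℕ)/2 : ℝ) = ((-2:ℤ):ℝ) by norm_num, Real.rpow_intCast]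
  rw [zpow_neg, zpow_two]
  field_simp

/-! ### Rademacher moments -/

lemma rademacher_int (g : ℝ → ℝ) (hg : Measurable g) :
    ∫ t, g t ∂rademacherMeasure = (g (-1) + g 1) / 2 := by
  unfold rademacherMeasure
  have h1 : Integrable g ((1/2 : ℝ≥0∞) • Measure.dirac (-1:ℝ)) := by
    apply Integrable.smul_measure
    · exact (integrable_const (g (-1))).congr (ae_eq_dirac g).symm
    · norm_num
  have h2 : Integrable g ((1/2 : ℝ≥0∞) • Measure.dirac (1:ℝ)) := by
    apply Integrable.smul_measure
    · exact (integrable_const (g 1)).congr (ae_eq_dirac g).symm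
    · norm_num
  rw [integral_add_measure h1 h2, integral_smul_measure, integral_smul_measure,
    integral_dirac, integral_dirac]
  norm_num
  ring

end DCSKHelper

/-- harvested DC of the correlator output Y = h·(1+d)·Σ x_k of a
DCSK symbol over a unit-mean-power Nakagami-m channel:
ε₁E[Y²] + ε₂E[Y⁴] = ε₁β + ε₂(3(1+m)/m)β(2β−1). -/
theorem stmt_2 {Ω : Type*} [MeasurableSpace Ω] (P : Measure Ω) [IsProbabilityMeasure P]
    (β : ℕ) (hβ : 0 < β) (m : ℝ) (hm : 1 ≤ m)
    (x : Fin β → Ω → ℝ) (d h : Ω → ℝ)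
    (hxmeas : ∀ k, Measurable (x k)) (hdmeas : Measurable d) (hhmeas : Measurable h)
    (hxlaw : ∀ k, Measure.map (x k) P = arcsineMeasure)
    (hdlaw : Measure.map d P = rademacherMeasure)
    (hhlaw : Measure.map h P = nakagamiMeasure m)
    (hindep : iIndepFun (Sum.elim x ![d, h]) P)
    (Y : Ω → ℝ) (hY : Y = fun ω => h ω * (1 + d ω) * ∑ k, x k ω)
    (ε₁ ε₂ : ℝ) :
    ε₁ * (∫ ω, Y ω ^ 2 ∂P) + ε₂ * (∫ ω, Y ω ^ 4 ∂P)
      = ε₁ * (β : ℝ) + ε₂ * (3 * (1 + m) / m) * (β : ℝ) * (2 * (β : ℝ) - 1) := by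
  classical
  have hm0 : (0:ℝ) < m := lt_of_lt_of_le one_pos hm
  set X := Sum.elim x ![d, h] with hXdef
  have hXmeas : ∀ i, Measurable (X i) := by
    rintro (k | j)
    · exact hxmeas k
    · fin_cases j
      · exact hdmeas
      · exact hhmeas
  -- a.e. bound on the chips
  have hxbd : ∀ᵐ ω ∂P, ∀ k, |x k ω| ≤ 1 := by
    rw [MeasureTheory.ae_all_iff]
    intro k
    have hA : MeasurableSet {t : ℝ | ¬ |t| ≤ 1} := by
      simp only [not_le]; exact measurableSet_lt measurable_const (by fun_prop)
    have h0 : P ((x k) ⁻¹' {t : ℝ | ¬ |t| ≤ 1}) = 0 := by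
      rw [← Measure.map_apply (hxmeas k) hA, hxlaw k]
      exact DCSKHelper.arcsine_out
    rw [MeasureTheory.ae_iff]
    exact h0
  have hbdd_int : ∀ (f : Ω → ℝ) (C : ℝ), Measurable f → (∀ᵐ ω ∂P, |f ω| ≤ C) →
      Integrable f P := fun f C hf hb =>
    Integrable.mono' (integrable_const C) hf.aestronglyMeasurable
      (by simpa [Real.norm_eq_abs] using hb)
  -- partial sums
  set S : Finset (Fin β) → Ω → ℝ := fun s ω => ∑ k ∈ s, x k ω with hSdef
  have hSmeas : ∀ s, Measurable (S s) := fun s => Finset.measurable_sum s (fun k _ => hxmeas k)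
  have hSbd : ∀ s : Finset (Fin β), ∀ᵐ ω ∂P, |S s ω| ≤ s.card := by
    intro s
    filter_upwards [hxbd] with ω hω
    calc |S s ω| ≤ ∑ k ∈ s, |x k ω| := Finset.abs_sum_le_sum_abs _ _
    _ ≤ ∑ _k ∈ s, (1:ℝ) := Finset.sum_le_sum (fun k _ => hω k)
    _ = s.card := by simp
  have hx_int : ∀ (a : Fin β) (p : ℕ), Integrable (fun ω => (x a ω)^p) P := by
    intro a p
    apply hbdd_int _ 1 ((hxmeas a).pow_const p)
    filter_upwards [hxbd] with ω hω
    rw [abs_pow]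
    exact pow_le_one₀ (abs_nonneg _) (hω a)
  have hS_int : ∀ (s : Finset (Fin β)) (q : ℕ), Integrable (fun ω => (S s ω)^q) P := by
    intro s q
    apply hbdd_int _ ((s.card:ℝ)^q) ((hSmeas s).pow_const q)
    filter_upwards [hSbd s] with ω hω
    rw [abs_pow]
    exact pow_le_pow_left₀ (abs_nonneg _) hω q
  have hxS_int : ∀ (a : Fin β) (s : Finset (Fin β)) (p q : ℕ),
      Integrable (fun ω => (x a ω)^p * (S s ω)^q) P := by
    intro a s p q
    apply hbdd_int _ (1 * (s.card:ℝ)^q) (((hxmeas a).pow_const p).mul ((hSmeas s).pow_const q))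
    filter_upwards [hxbd, hSbd s] with ω h1 h2
    rw [Pi.mul_apply, abs_mul, abs_pow, abs_pow]
    exact mul_le_mul (pow_le_one₀ (abs_nonneg _) (h1 a))
      (pow_le_pow_left₀ (abs_nonneg _) h2 q) (by positivity) (by norm_num)
  -- moment transfer
  have hxmom : ∀ (k : Fin β) (n : ℕ), ∫ ω, (x k ω)^n ∂P = ∫ t, t^n ∂arcsineMeasure := by
    intro k n
    have hmeas : Measurable fun t : ℝ => t^n := by fun_prop
    have := MeasureTheory.integral_map (μ := P) (hxmeas k).aemeasurable
      (f := fun t : ℝ => t^n) hmeas.aestronglyMeasurable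
    rw [hxlaw k] at this
    exact this.symm
  have hdmom : ∀ j : ℕ, ∫ ω, (1 + d ω)^j ∂P = ((1+(-1:ℝ))^j + (1+1:ℝ)^j)/2 := by
    intro j
    have hmeas : Measurable fun t : ℝ => (1+t)^j := by fun_prop
    have := MeasureTheory.integral_map (μ := P) hdmeas.aemeasurable
      (f := fun t : ℝ => (1+t)^j) hmeas.aestronglyMeasurable
    rw [hdlaw] at this
    rw [← this, DCSKHelper.rademacher_int _ hmeas]
  have hhmom : ∀ j : ℕ, ∫ ω, (h ω)^j ∂P = ∫ t, t^j ∂(nakagamiMeasure m) := by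
    intro j
    have hmeas : Measurable fun t : ℝ => t^j := by fun_prop
    have := MeasureTheory.integral_map (μ := P) hhmeas.aemeasurable
      (f := fun t : ℝ => t^j) hmeas.aestronglyMeasurable
    rw [hhlaw] at this
    exact this.symm
  -- independence of partial sums from fresh chips
  have hE1 : ∀ (s : Finset (Fin β)) (a : Fin β), a ∉ s → IndepFun (S s) (x a) P := by
    intro s a ha
    have hnm : Sum.inl a ∉ s.image (Sum.inl : Fin β → Fin β ⊕ Fin 2) := by
      simp only [Finset.mem_image]
      rintro ⟨b, hb, hba⟩
      exact ha ((Sum.inl.inj hba) ▸ hb)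
    have hi := hindep.indepFun_finsetSum_of_notMem hXmeas hnm
    have hsum : (∑ j ∈ s.image (Sum.inl : Fin β → Fin β ⊕ Fin 2), X j) = S s := by
      rw [Finset.sum_image (fun b _ c _ hbc => Sum.inl.inj hbc)]
      funext ω
      rw [Finset.sum_apply]
      rfl
    rwa [hsum] at hi
  have hprod : ∀ (s : Finset (Fin β)) (a : Fin β), a ∉ s → ∀ p q : ℕ,
      ∫ ω, (x a ω)^p * (S s ω)^q ∂P
        = (∫ ω, (x a ω)^p ∂P) * (∫ ω, (S s ω)^q ∂P) := by
    intro s a ha p q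
    have hi := (hE1 s a ha).symm.comp (measurable_id.pow_const p) (measurable_id.pow_const q)
    exact hi.integral_fun_mul_eq_mul_integral ((hxmeas a).pow_const p).aestronglyMeasurable
      ((hSmeas s).pow_const q).aestronglyMeasurable
  -- moments of the partial sums
  have hmain : ∀ s : Finset (Fin β),
      (∫ ω, (S s ω)^1 ∂P) = 0 ∧ (∫ ω, (S s ω)^2 ∂P) = (s.card:ℝ)/2 ∧
      (∫ ω, (S s ω)^4 ∂P) = 3/8*(s.card:ℝ)*(2*(s.card:ℝ)-1) := by
    intro s
    induction s using Finset.cons_induction with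
    | empty =>
      refine ⟨?_, ?_, ?_⟩ <;> · norm_num [hSdef]
    | cons a s ha ih =>
      obtain ⟨ih1, ih2, ih4⟩ := ih
      have hSc : ∀ ω, S (Finset.cons a s ha) ω = x a ω + S s ω := by
        intro ω
        simp [hSdef, Finset.sum_insert ha]
      have hcard : ((Finset.cons a s ha).card : ℝ) = (s.card:ℝ) + 1 := by
        rw [Finset.card_cons]; push_cast; ring
      constructor
      · have e : (fun ω => (S (Finset.cons a s ha) ω)^1)
            = fun ω => (x a ω)^1 + (S s ω)^1 := by
          funext ω; rw [hSc]; ring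
        rw [e, integral_add (hx_int a 1) (hS_int s 1), ih1,
          hxmom a 1, DCSKHelper.arcsine_moment1]
        ring
      constructor
      · have e : (fun ω => (S (Finset.cons a s ha) ω)^2)
            = fun ω => (x a ω)^2 + (2*((x a ω)^1 * (S s ω)^1) + (S s ω)^2) := by
          funext ω; rw [hSc]; ring
        have hg2 : Integrable (fun ω => 2*((x a ω)^1 * (S s ω)^1) + (S s ω)^2) P :=
          ((hxS_int a s 1 1).const_mul 2).add (hS_int s 2)
        rw [e, integral_add (hx_int a 2) hg2,
          integral_add ((hxS_int a s 1 1).const_mul 2) (hS_int s 2),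
          MeasureTheory.integral_const_mul, hprod s a ha 1 1,
          hxmom a 1, hxmom a 2, DCSKHelper.arcsine_moment1, DCSKHelper.arcsine_moment2,
          ih2, hcard]
        ring
      · have e : (fun ω => (S (Finset.cons a s ha) ω)^4)
            = fun ω => (x a ω)^4 + (4*((x a ω)^3 * (S s ω)^1)
              + (6*((x a ω)^2 * (S s ω)^2) + (4*((x a ω)^1 * (S s ω)^3) + (S s ω)^4))) := by
          funext ω; rw [hSc]; ring
        have hg3 : Integrable (fun ω => 4*((x a ω)^1 * (S s ω)^3) + (S s ω)^4) P :=
          ((hxS_int a s 1 3).const_mul 4).add (hS_int s 4)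
        have hg4 : Integrable (fun ω => 6*((x a ω)^2 * (S s ω)^2)
            + (4*((x a ω)^1 * (S s ω)^3) + (S s ω)^4)) P :=
          ((hxS_int a s 2 2).const_mul 6).add hg3
        have hg5 : Integrable (fun ω => 4*((x a ω)^3 * (S s ω)^1)
            + (6*((x a ω)^2 * (S s ω)^2) + (4*((x a ω)^1 * (S s ω)^3) + (S s ω)^4))) P :=
          ((hxS_int a s 3 1).const_mul 4).add hg4
        rw [e, integral_add (hx_int a 4) hg5,
          integral_add ((hxS_int a s 3 1).const_mul 4) hg4,
          integral_add ((hxS_int a s 2 2).const_mul 6) hg3,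
          integral_add ((hxS_int a s 1 3).const_mul 4) (hS_int s 4),
          MeasureTheory.integral_const_mul, MeasureTheory.integral_const_mul,
          MeasureTheory.integral_const_mul,
          hprod s a ha 3 1, hprod s a ha 2 2, hprod s a ha 1 3,
          hxmom a 1, hxmom a 2, hxmom a 4,
          DCSKHelper.arcsine_moment1, DCSKHelper.arcsine_moment2, DCSKHelper.arcsine_moment4,
          ih1, ih2, ih4, hcard]
        ring
  -- three-factor splitting of the correlator moments
  have hsplit : ∀ j : ℕ, ∫ ω, Y ω ^ j ∂P
      = (∫ ω, (h ω)^j ∂P) * ((∫ ω, (1 + d ω)^j ∂P) * (∫ ω, (S Finset.univ ω)^j ∂P)) := by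
    intro j
    have hd1j : Measurable fun t : ℝ => (1+t)^j := by fun_prop
    set T1 : Finset (Fin β ⊕ Fin 2) := {Sum.inr 1} with hT1
    set T2 : Finset (Fin β ⊕ Fin 2) := insert (Sum.inr 0) (Finset.univ.image Sum.inl) with hT2
    have hdisj : Disjoint T1 T2 := by
      simp [hT1, hT2, Finset.disjoint_left, Fin.ext_iff]
    have hbase := hindep.indepFun_finset T1 T2 hdisj hXmeas
    have hmem1 : (Sum.inr 1 : Fin β ⊕ Fin 2) ∈ T1 := by simp [hT1]
    have hmem2 : (Sum.inr 0 : Fin β ⊕ Fin 2) ∈ T2 := by simp [hT2]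
    have hmem3 : ∀ k : Fin β, (Sum.inl k : Fin β ⊕ Fin 2) ∈ T2 := by
      intro k; simp [hT2]
    set φ1 : ({i // i ∈ T1} → ℝ) → ℝ := fun v => (v ⟨Sum.inr 1, hmem1⟩)^j with hφ1def
    set φ2 : ({i // i ∈ T2} → ℝ) → ℝ := fun v =>
      (1 + v ⟨Sum.inr 0, hmem2⟩)^j * (∑ k : Fin β, v ⟨Sum.inl k, hmem3 k⟩)^j with hφ2def
    have hφ1 : Measurable φ1 := (measurable_pi_apply _).pow_const j
    have hφ2 : Measurable φ2 := by
      apply Measurable.mul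
      · exact (measurable_const.add (measurable_pi_apply _)).pow_const j
      · apply Measurable.pow_const
        apply Finset.measurable_sum
        intro k _
        exact measurable_pi_apply _
    have hcomp := hbase.comp hφ1 hφ2
    have hfun1 : (φ1 ∘ (fun ω (i : {i // i ∈ T1}) => X i ω)) = fun ω => (h ω)^j := by
      funext ω
      simp [hφ1def, hXdef]
    have hfun2 : (φ2 ∘ (fun ω (i : {i // i ∈ T2}) => X i ω))
        = fun ω => (1 + d ω)^j * (S Finset.univ ω)^j := by
      funext ω
      simp [hφ2def, hXdef, hSdef]
    rw [hfun1, hfun2] at hcomp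
    have hdS : IndepFun d (S Finset.univ) P := by
      have hnm : Sum.inr (0 : Fin 2) ∉ Finset.univ.image (Sum.inl : Fin β → Fin β ⊕ Fin 2) := by
        simp
      have hi := hindep.indepFun_finsetSum_of_notMem hXmeas hnm
      have hsum : (∑ j2 ∈ Finset.univ.image Sum.inl, X j2) = S Finset.univ := by
        rw [Finset.sum_image (fun b _ c _ hbc => Sum.inl.inj hbc)]
        funext ω
        rw [Finset.sum_apply]
        rfl
      have hd0 : X (Sum.inr 0) = d := by simp [hXdef]
      rw [hsum, hd0] at hi
      exact hi.symm
    have hdS' := hdS.comp hd1j (measurable_id.pow_const j)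
    have e : (fun ω => Y ω ^ j) = fun ω => (h ω)^j * ((1+d ω)^j * (S Finset.univ ω)^j) := by
      funext ω
      rw [hY]
      simp only [hSdef]
      rw [mul_pow, mul_pow, mul_assoc]
    rw [e, hcomp.integral_fun_mul_eq_mul_integral (hhmeas.pow_const j).aestronglyMeasurable
      (((hd1j.comp hdmeas).mul ((hSmeas Finset.univ).pow_const j)).aestronglyMeasurable)]
    congr 1
    exact hdS'.integral_fun_mul_eq_mul_integral (hd1j.comp hdmeas).aestronglyMeasurable
      ((hSmeas Finset.univ).pow_const j).aestronglyMeasurable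
  obtain ⟨_, h2, h4⟩ := hmain Finset.univ
  rw [Finset.card_univ, Fintype.card_fin] at h2 h4
  rw [hsplit 2, hsplit 4, h2, h4, hdmom 2, hdmom 4, hhmom 2, hhmom 4,
    DCSKHelper.nakagami_sq hm, DCSKHelper.nakagami_quart hm]
  field_simp
  ring
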